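/- Let λ > 0, α > 0 and β > 0. There exists a unique T* > 0 satisfying e^{λT*} − λT* = (α/β)λ + 1, and this T* is the global minimizer on (0, ∞) of the function ℰ(T) = (αλ + β(e^{-λT} + λT − 1))/(λ(1 − e^{-λT})), i.e. ℰ(T*) ≤ ℰ(T) for all T > 0. -/
import Mathlib


open Real

lemma aux_exp_lt_one {x : ℝ} (hx : 0 < x) : 0 < 1 - Real.exp (-x) := by
  have : Real.exp (-x) < Real.exp 0 := Real.exp_lt_exp.mpr (by linarith)
  simpa using this

lemma aux_mono {a b : ℝ} (ha : 0 ≤ a) (hab : a < b) :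
    Real.exp a - a < Real.exp b - b := by
  have h1 : b - a + 1 < Real.exp (b - a) := Real.add_one_lt_exp (by linarith)
  have h2 : Real.exp b = Real.exp a * Real.exp (b - a) := by
    rw [← Real.exp_add]; ring_nf
  have h3 : 1 ≤ Real.exp a := Real.one_le_exp ha
  nlinarith [Real.exp_pos a]

lemma aux_key (r α β s x : ℝ) (hr : 0 < r) (hβ : 0 < β) (hs : 0 < s) (hx : 0 < x)
    (heq : Real.exp s - s = (α / β) * r + 1) :
    (α * r + β * (Real.exp (-s) + s - 1)) / (r * (1 - Real.exp (-s)))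
      ≤ (α * r + β * (Real.exp (-x) + x - 1)) / (r * (1 - Real.exp (-x))) := by
  have hds : 0 < 1 - Real.exp (-s) := aux_exp_lt_one hs
  have hdx : 0 < 1 - Real.exp (-x) := aux_exp_lt_one hx
  have hαr : α * r = β * (Real.exp s - s - 1) := by
    have h1 : Real.exp s - s - 1 = α / β * r := by linarith
    rw [h1]; field_simp
  have hes : Real.exp (-s) * Real.exp s = 1 := by
    rw [← Real.exp_add]; simp
  have hLHS : (α * r + β * (Real.exp (-s) + s - 1)) / (r * (1 - Real.exp (-s)))
      = β * (Real.exp s - 1) / r := by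
    rw [hαr, div_eq_div_iff (by positivity) hr.ne']
    linear_combination (β * r) * hes
  rw [hLHS, div_le_div_iff₀ hr (by positivity : 0 < r * (1 - Real.exp (-x))), hαr]
  have hE : Real.exp s * Real.exp (-x) = Real.exp (s - x) := by
    rw [← Real.exp_add]; ring_nf
  have h1 : s - x + 1 ≤ Real.exp (s - x) := Real.add_one_le_exp _
  have key : (Real.exp s - 1) * (1 - Real.exp (-x))
      ≤ (Real.exp s - s - 1) + (Real.exp (-x) + x - 1) := by
    nlinarith [hE, h1]
  have h2 := mul_le_mul_of_nonneg_left key (le_of_lt (mul_pos hβ hr))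
  nlinarith [h2]

/-- For `r, α, β > 0` there is a unique `T* > 0` with `e^{rT*} − rT* = (α/β)r + 1`, and this
`T*` is the global minimizer on `(0, ∞)` of
`ℰ(T) = (αr + β(e^{-rT} + rT − 1))/(r(1 − e^{-rT}))`. -/
theorem optimal_sampling_interval_exponential (r α β : ℝ) (hr : 0 < r) (hα : 0 < α)
    (hβ : 0 < β) :
    (∃! T : ℝ, 0 < T ∧ Real.exp (r * T) - r * T = (α / β) * r + 1) ∧
      ∀ T : ℝ, (0 < T ∧ Real.exp (r * T) - r * T = (α / β) * r + 1) →
        ∀ t : ℝ, 0 < t →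
          (α * r + β * (Real.exp (-(r * T)) + r * T - 1)) / (r * (1 - Real.exp (-(r * T))))
            ≤ (α * r + β * (Real.exp (-(r * t)) + r * t - 1))
                / (r * (1 - Real.exp (-(r * t)))) := by
  have hc1 : 1 < (α / β) * r + 1 := by
    have : 0 < α / β * r := by positivity
    linarith
  constructor
  · -- existence and uniqueness
    obtain ⟨x, hx, hgx⟩ : ∃ x : ℝ, 0 < x ∧ Real.exp x - x = (α / β) * r + 1 := by
      set c : ℝ := (α / β) * r + 1 with hc
      have hcont : ContinuousOn (fun y : ℝ => Real.exp y - y) (Set.Icc 0 (2*c)) :=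
        (Real.continuous_exp.sub continuous_id).continuousOn
      have h02c : (0:ℝ) ≤ 2*c := by linarith
      have hIVT := intermediate_value_Icc h02c hcont
      have hmem : c ∈ Set.Icc ((fun y : ℝ => Real.exp y - y) 0)
          ((fun y : ℝ => Real.exp y - y) (2*c)) := by
        constructor
        · simp [Real.exp_zero]; linarith
        · have h1 : c + 1 ≤ Real.exp c := Real.add_one_le_exp c
          have h2 : Real.exp (2*c) = Real.exp c * Real.exp c := by
            rw [← Real.exp_add]; ring_nf
          simp only
          nlinarith
      obtain ⟨x, hx1, hx2⟩ := hIVT hmem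
      refine ⟨x, ?_, hx2⟩
      rcases lt_or_eq_of_le hx1.1 with h | h
      · exact h
      · exfalso; rw [← h] at hx2; simp [Real.exp_zero] at hx2; linarith
    refine ⟨x / r, ⟨by positivity, ?_⟩, ?_⟩
    · have hxr : r * (x / r) = x := by field_simp
      rw [hxr, hgx]
    · rintro T ⟨hT, hTeq⟩
      have key : r * T = x := by
        rcases lt_trichotomy (r * T) x with h | h | h
        · have := aux_mono (by positivity : (0:ℝ) ≤ r * T) h
          rw [hTeq, hgx] at this; linarith
        · exact h
        · have := aux_mono (by positivity : (0:ℝ) ≤ x) h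
          rw [hTeq, hgx] at this; linarith
      field_simp
      linarith [key]
  · -- optimality
    rintro T ⟨hT, hTeq⟩ t ht
    exact aux_key r α β (r * T) (r * t) hr hβ (by positivity) (by positivity) hTeq
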